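/- arXiv:2006.07517 — 3 statements merged into one kernel-verified Lean document; each statement's English description precedes it below -/
import Mathlib

section
/- Let f : ℝ → ℝ be continuous, and suppose that for every meager set A ⊆ ℝ, the image f(A) has Lebesgue measure zero. Then f is constant. -/
open MeasureTheory Set

lemma aux_nwd_meagre {T : Set ℝ} (h : IsNowhereDense T) : IsMeagre T := by
  rw [isMeagre_iff_countable_union_isNowhereDense]
  exact ⟨{T}, by simpa using h, countable_singleton T, by simp⟩

theorem stmt_13 (f : ℝ → ℝ) (hf : Continuous f)
    (hsmall : ∀ A : Set ℝ, IsMeagre A → volume (f '' A) = 0) :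
    ∃ c : ℝ, ∀ x : ℝ, f x = c := by
  by_contra hcon
  push_neg at hcon
  obtain ⟨b, hb⟩ := hcon (f 0)
  set lo := min (f 0) (f b) with hlo
  set hi := max (f 0) (f b) with hhi
  have hlohi : lo < hi := min_lt_max.2 hb.symm
  -- the interval [lo, hi] is contained in the range of f
  have hrange : Icc lo hi ⊆ range f := by
    have hpc : IsPreconnected (range f) := isPreconnected_range hf
    have hoc := hpc.ordConnected
    have h1 : lo ∈ range f := by
      rcases min_cases (f 0) (f b) with ⟨h, _⟩ | ⟨h, _⟩ <;> rw [hlo, h] <;> exact mem_range_self _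
    have h2 : hi ∈ range f := by
      rcases max_cases (f 0) (f b) with ⟨h, _⟩ | ⟨h, _⟩ <;> rw [hhi, h] <;> exact mem_range_self _
    exact hoc.out h1 h2
  -- D: set of values whose fiber has nonempty interior; countable
  set D : Set ℝ := {y | (interior (f ⁻¹' {y})).Nonempty} with hDdef
  have hD : D.Countable := by
    have hsub : D ⊆ range (fun q : ℚ => f (q : ℝ)) := by
      intro y hy
      obtain ⟨q, hq⟩ := (Rat.denseRange_cast (𝕜 := ℝ)).exists_mem_open isOpen_interior hy
      exact ⟨q, by simpa using interior_subset hq⟩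
    exact (countable_range _).mono hsub
  have hDnull : volume D = 0 := hD.measure_zero _
  -- a dense open set G with small measure
  set ε := (hi - lo) / 2 with hεdef
  have hεpos : 0 < ε := by rw [hεdef]; linarith
  set e : ℕ → ℝ := fun n => ((Denumerable.eqv ℚ).symm n : ℝ) with he
  set G : Set ℝ := ⋃ n, Metric.ball (e n) (ε / 2 / 2 ^ n / 2) with hG
  have hGopen : IsOpen G := isOpen_iUnion fun n => Metric.isOpen_ball
  have hGdense : Dense G := by
    have h1 : range e ⊆ G := by
      rintro x ⟨n, rfl⟩
      exact mem_iUnion.2 ⟨n, Metric.mem_ball_self (by positivity)⟩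
    have h2 : DenseRange e := by
      have : range e = range (fun q : ℚ => (q : ℝ)) := by
        rw [he]
        exact Function.Surjective.range_comp (Denumerable.eqv ℚ).symm.surjective _
      rw [DenseRange, this]
      exact Rat.denseRange_cast
    exact h2.mono h1
  have hGvol : volume G ≤ ENNReal.ofReal ε := by
    calc volume G ≤ ∑' n, volume (Metric.ball (e n) (ε / 2 / 2 ^ n / 2)) := measure_iUnion_le _
    _ = ∑' n, ENNReal.ofReal (2 * (ε / 2 / 2 ^ n / 2)) := by simp [Real.volume_ball]
    _ = ∑' n, ENNReal.ofReal (ε / 2 / 2 ^ n) := by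
        congr 1; funext n; congr 1; ring
    _ = ENNReal.ofReal (∑' n, ε / 2 / 2 ^ n) := by
        rw [ENNReal.ofReal_tsum_of_nonneg (fun n => by positivity) (summable_geometric_two' ε)]
    _ = ENNReal.ofReal ε := by rw [tsum_geometric_two']
  -- the fat nowhere dense set M
  set M : Set ℝ := Icc lo hi \ G with hM
  have hMclosed : IsClosed M := by
    rw [hM, diff_eq]
    exact isClosed_Icc.inter hGopen.isClosed_compl
  have hMint : interior M = ∅ := by
    have h1 : M ⊆ Gᶜ := fun x hx => hx.2
    have h2 : interior M ⊆ interior Gᶜ := interior_mono h1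
    rw [interior_compl, hGdense.closure_eq, compl_univ] at h2
    exact eq_empty_iff_forall_notMem.2 fun x hx => h2 hx
  have hMpos : 0 < volume M := by
    have h1 : ENNReal.ofReal (hi - lo) - ENNReal.ofReal ε ≤ volume M := by
      rw [hM, ← Real.volume_Icc]
      exact le_trans (tsub_le_tsub_left hGvol _) (le_measure_diff)
    rw [← ENNReal.ofReal_sub _ hεpos.le] at h1
    have h2 : 0 < hi - lo - ε := by rw [hεdef]; linarith
    calc (0 : ENNReal) < ENNReal.ofReal (hi - lo - ε) := ENNReal.ofReal_pos.2 h2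
    _ ≤ volume M := h1
  -- key: interior of preimage of M is contained in preimage of D
  have hkey : interior (f ⁻¹' M) ⊆ f ⁻¹' D := by
    intro x hx
    obtain ⟨r, hr, hball⟩ := Metric.isOpen_iff.1 isOpen_interior x hx
    have hconst : ∀ z ∈ Metric.ball x r, f z = f x := by
      intro z hz
      by_contra hne
      have hpre : IsPreconnected (f '' Metric.ball x r) :=
        ((convex_ball x r).isPreconnected).image f hf.continuousOn
      have hsubM : f '' Metric.ball x r ⊆ M := by
        rintro y ⟨w, hw, rfl⟩
        exact (interior_subset (hball hw) : w ∈ f ⁻¹' M)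
      have huicc : uIcc (f z) (f x) ⊆ M :=
        (hpre.ordConnected.uIcc_subset ⟨z, hz, rfl⟩ ⟨x, Metric.mem_ball_self hr, rfl⟩).trans hsubM
      have h1 : (interior (uIcc (f z) (f x))).Nonempty := by
        rw [uIcc, interior_Icc]
        exact nonempty_Ioo.2 (min_lt_max.2 hne)
      obtain ⟨y, hy⟩ := h1
      have : y ∈ interior M := interior_mono huicc hy
      rw [hMint] at this
      exact this
    have hb2 : Metric.ball x r ⊆ f ⁻¹' {f x} := fun z hz => hconst z hz
    exact ⟨x, interior_maximal hb2 Metric.isOpen_ball (Metric.mem_ball_self hr)⟩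
  -- A := f ⁻¹' (M \ D) is meagre
  have hA : IsMeagre (f ⁻¹' (M \ D)) := by
    have h1 : f ⁻¹' (M \ D) ⊆ f ⁻¹' M \ interior (f ⁻¹' M) := by
      rintro x ⟨hx1, hx2⟩
      exact ⟨hx1, fun hint => hx2 (hkey hint)⟩
    have hcl : IsClosed (f ⁻¹' M \ interior (f ⁻¹' M)) := by
      rw [diff_eq]
      exact (hMclosed.preimage hf).inter isOpen_interior.isClosed_compl
    have hnwd : IsNowhereDense (f ⁻¹' M \ interior (f ⁻¹' M)) := by
      rw [hcl.isNowhereDense_iff]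
      have h3 : interior (f ⁻¹' M \ interior (f ⁻¹' M)) ⊆
          interior (f ⁻¹' M) ∩ (interior (f ⁻¹' M))ᶜ := fun x hx =>
        ⟨interior_mono diff_subset hx, (interior_subset hx).2⟩
      rw [inter_compl_self] at h3
      exact eq_empty_iff_forall_notMem.2 fun x hx => h3 hx
    exact (aux_nwd_meagre hnwd).mono h1
  -- the image of A is M \ D which has positive measure: contradiction
  have himg : f '' (f ⁻¹' (M \ D)) = M \ D := by
    rw [image_preimage_eq_inter_range, inter_eq_left]
    exact fun y hy => hrange hy.1.1
  have h0 : volume (M \ D) = 0 := by rw [← himg]; exact hsmall _ hA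
  have : volume M = 0 := by
    rw [← le_zero_iff]
    have hsub : M ⊆ (M \ D) ∪ D := fun x hx => by
      by_cases hxD : x ∈ D
      · exact Or.inr hxD
      · exact Or.inl ⟨hx, hxD⟩
    calc volume M ≤ volume ((M \ D) ∪ D) := measure_mono hsub
    _ ≤ volume (M \ D) + volume D := measure_union_le _ _
    _ = 0 := by rw [h0, hDnull, add_zero]
  exact absurd this hMpos.ne'
end

section
/- Let μ be a Borel probability measure on ℝ concentrated on [0,1] (i.e., μ([0,1]) = 1), and let F : [0,1] → ℝ be defined by F(x) = μ([0, x]). Then the following are equivalent: (1) μ and Lebesgue measure restricted to [0,1] are mutually absolutely continuous (each is absolutely continuous with respect to the other); (2) F is a homeomorphism of [0,1] onto [0,1], and both F and its inverse F⁻¹ satisfy Luzin's property (N). -/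
open MeasureTheory Set

namespace Stmt15Aux

variable {μ : Measure ℝ} [IsProbabilityMeasure μ] {F : ℝ → ℝ}

lemma out_null (hconc : μ (Set.Icc (0:ℝ) 1) = 1) : μ (Iio (0:ℝ) ∪ Ioi 1) = 0 := by
  have h : μ (Set.Icc (0:ℝ) 1)ᶜ = 0 := by
    rw [measure_compl measurableSet_Icc (measure_ne_top μ _), hconc, measure_univ, tsub_self]
  refine measure_mono_null ?_ h
  intro x hx
  simp only [mem_union, mem_Iio, mem_Ioi] at hx
  simp only [mem_compl_iff, mem_Icc, not_and_or, not_le]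
  tauto

lemma Iic_eq (hconc : μ (Set.Icc (0:ℝ) 1) = 1) (x : ℝ) : μ (Iic x) = μ (Icc 0 x) := by
  have hIio : μ (Iio (0:ℝ)) = 0 :=
    measure_mono_null subset_union_left (out_null hconc)
  rcases le_or_gt 0 x with hx | hx
  · refine le_antisymm ?_ (measure_mono Icc_subset_Iic_self)
    calc μ (Iic x) ≤ μ (Iio 0 ∪ Icc 0 x) := by
          refine measure_mono fun y hy => ?_
          rcases lt_or_ge y 0 with h | h
          · exact Or.inl h
          · exact Or.inr ⟨h, hy⟩
      _ ≤ μ (Iio 0) + μ (Icc 0 x) := measure_union_le _ _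
      _ = μ (Icc 0 x) := by rw [hIio, zero_add]
  · rw [Icc_eq_empty (not_le.mpr hx), measure_empty]
    exact measure_mono_null (fun y hy => lt_of_le_of_lt hy hx) hIio

lemma Fmono (hF : ∀ x : ℝ, F x = (μ (Set.Icc 0 x)).toReal) : Monotone F := by
  intro a b hab
  rw [hF a, hF b]
  exact ENNReal.toReal_mono (measure_ne_top μ _) (measure_mono (Icc_subset_Icc_right hab))

lemma Fnonneg (hF : ∀ x : ℝ, F x = (μ (Set.Icc 0 x)).toReal) (x : ℝ) : 0 ≤ F x := by
  rw [hF]; exact ENNReal.toReal_nonneg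

lemma Fle_one (hF : ∀ x : ℝ, F x = (μ (Set.Icc 0 x)).toReal) (x : ℝ) : F x ≤ 1 := by
  rw [hF]
  have := ENNReal.toReal_mono (by simp) (prob_le_one (μ := μ) (s := Icc 0 x))
  simpa using this

lemma F_one (hconc : μ (Set.Icc (0:ℝ) 1) = 1) (hF : ∀ x : ℝ, F x = (μ (Set.Icc 0 x)).toReal)
    {x : ℝ} (hx : (1:ℝ) ≤ x) : F x = 1 := by
  rw [hF]
  have h1 : μ (Icc 0 x) = 1 :=
    le_antisymm prob_le_one (hconc ▸ measure_mono (Icc_subset_Icc_right hx))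
  rw [h1]; simp

lemma core (hconc : μ (Set.Icc (0:ℝ) 1) = 1)
    (hF : ∀ x : ℝ, F x = (μ (Set.Icc 0 x)).toReal)
    (hsm : StrictMonoOn F (Set.Icc 0 1))
    (hsurj : Set.SurjOn F (Set.Icc (0:ℝ) 1) (Set.Icc (0:ℝ) 1))
    (hcont : ContinuousOn F (Set.Icc (0:ℝ) 1))
    {B : Set ℝ} (hBm : MeasurableSet B) (hB : B ⊆ Set.Icc (0:ℝ) 1) :
    volume (F '' B) = μ B := by
  have hmono : Monotone F := Fmono hF
  have hFm : Measurable F := hmono.measurable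
  have hF0 : F 0 = 0 := by
    obtain ⟨c, hc, hFc⟩ := hsurj (left_mem_Icc.mpr zero_le_one)
    have h := hmono hc.1
    rw [hFc] at h
    exact le_antisymm h (Fnonneg hF 0)
  haveI : IsFiniteMeasure (volume.restrict (Icc (0:ℝ) 1)) := by
    constructor
    rw [Measure.restrict_apply_univ, Real.volume_Icc]
    exact ENNReal.ofReal_lt_top
  have hmap : μ.map F = volume.restrict (Icc (0:ℝ) 1) := by
    refine Measure.ext_of_Iic _ _ fun b => ?_
    rw [Measure.map_apply hFm measurableSet_Iic, Measure.restrict_apply measurableSet_Iic]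
    rcases lt_or_ge b 0 with hb | hb
    · have h1 : F ⁻¹' Iic b = ∅ := by
        refine eq_empty_of_forall_notMem fun x hx => ?_
        exact absurd (le_trans (Fnonneg hF x) hx) (not_le.mpr hb)
      have h2 : Iic b ∩ Icc 0 1 = (∅ : Set ℝ) := by
        refine eq_empty_of_forall_notMem fun x hx => ?_
        exact absurd (le_trans hx.2.1 hx.1) (not_le.mpr hb)
      rw [h1, h2]
      simp
    rcases lt_or_ge b 1 with hb1 | hb1
    · obtain ⟨c, hc, hFc⟩ := hsurj ⟨hb, hb1.le⟩
      have hpre : F ⁻¹' Iic b = Iic c := by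
        ext x
        simp only [mem_preimage, mem_Iic]
        constructor
        · intro hx
          by_contra hcx
          push_neg at hcx
          rcases le_or_gt x 1 with hx1 | hx1
          · have := hsm hc ⟨hc.1.trans hcx.le, hx1⟩ hcx
            rw [hFc] at this
            linarith
          · have := F_one hconc hF hx1.le
            linarith
        · intro hx
          rw [← hFc]
          exact hmono hx
      have h2 : Iic b ∩ Icc 0 1 = Icc 0 b := by
        ext x
        simp only [mem_inter_iff, mem_Iic, mem_Icc]
        constructor
        · rintro ⟨h1, h2, h3⟩; exact ⟨h2, h1⟩
        · rintro ⟨h1, h2⟩; exact ⟨h2, h1, h2.trans hb1.le⟩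
      rw [hpre, h2, Real.volume_Icc, Iic_eq hconc,
        ← ENNReal.ofReal_toReal (measure_ne_top μ (Icc 0 c)), ← hF c, hFc, sub_zero]
    · have hpre : F ⁻¹' Iic b = univ :=
        eq_univ_of_forall fun x => le_trans (Fle_one hF x) hb1
      have h2 : Iic b ∩ Icc 0 1 = Icc (0:ℝ) 1 :=
        inter_eq_right.mpr fun x hx => le_trans hx.2 hb1
      rw [hpre, h2, measure_univ, Real.volume_Icc]
      norm_num
  -- measurability of the image
  have hinj : Set.InjOn F (Icc (0:ℝ) 1) := hsm.injOn
  haveI : CompactSpace (Icc (0:ℝ) 1) := isCompact_iff_compactSpace.mp isCompact_Icc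
  have hfcont : Continuous ((Icc (0:ℝ) 1).restrict F) :=
    continuousOn_iff_continuous_restrict.mp hcont
  have hfinj : Function.Injective ((Icc (0:ℝ) 1).restrict F) := by
    intro a b hab
    exact Subtype.ext (hinj a.2 b.2 hab)
  have hemb : MeasurableEmbedding ((Icc (0:ℝ) 1).restrict F) :=
    (hfcont.isClosedEmbedding hfinj).measurableEmbedding
  have himB : F '' B = (Icc (0:ℝ) 1).restrict F '' (Subtype.val ⁻¹' B) := by
    ext y
    constructor
    · rintro ⟨x, hxB, rfl⟩
      exact ⟨⟨x, hB hxB⟩, hxB, rfl⟩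
    · rintro ⟨⟨x, hx⟩, hxB, rfl⟩
      exact ⟨x, hxB, rfl⟩
  have hBm' : MeasurableSet (F '' B) := by
    rw [himB]
    exact hemb.measurableSet_image' (measurable_subtype_coe hBm)
  have hmaps : MapsTo F (Icc (0:ℝ) 1) (Icc (0:ℝ) 1) := fun x hx =>
    ⟨by rw [← hF0]; exact hmono hx.1, by rw [← F_one hconc hF le_rfl]; exact hmono hx.2⟩
  calc volume (F '' B) = volume.restrict (Icc (0:ℝ) 1) (F '' B) := by
        rw [Measure.restrict_apply hBm',
          inter_eq_left.mpr ((image_mono (f := F) hB).trans hmaps.image_subset)]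
    _ = μ.map F (F '' B) := by rw [hmap]
    _ = μ (F ⁻¹' (F '' B)) := Measure.map_apply hFm hBm'
    _ = μ B := by
        refine le_antisymm ?_ (measure_mono (subset_preimage_image F B))
        have hss : F ⁻¹' (F '' B) ⊆ B ∪ (Iio 0 ∪ Ioi 1) := by
          intro x hx
          obtain ⟨a, haB, hFa⟩ := hx
          by_cases hxI : x ∈ Icc (0:ℝ) 1
          · exact Or.inl (hinj (hB haB) hxI hFa ▸ haB)
          · simp only [mem_Icc, not_and_or, not_le] at hxI
            rcases hxI with h | h
            · exact Or.inr (Or.inl h)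
            · exact Or.inr (Or.inr h)
        calc μ (F ⁻¹' (F '' B)) ≤ μ (B ∪ (Iio 0 ∪ Ioi 1)) := measure_mono hss
          _ ≤ μ B + μ (Iio 0 ∪ Ioi 1) := measure_union_le _ _
          _ = μ B := by rw [out_null hconc, add_zero]

lemma contOn_inv {F G : ℝ → ℝ} (hbij : Set.BijOn F (Icc (0:ℝ) 1) (Icc (0:ℝ) 1))
    (hcont : ContinuousOn F (Icc (0:ℝ) 1))
    (hinv : Set.InvOn G F (Icc (0:ℝ) 1) (Icc (0:ℝ) 1))
    (hGmaps : Set.MapsTo G (Icc (0:ℝ) 1) (Icc (0:ℝ) 1)) :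
    ContinuousOn G (Icc (0:ℝ) 1) := by
  haveI : CompactSpace (Icc (0:ℝ) 1) := isCompact_iff_compactSpace.mp isCompact_Icc
  have hinj := hbij.injOn
  have hecont : Continuous (Set.BijOn.equiv F hbij) := by
    have h : Continuous fun x : ↥(Icc (0:ℝ) 1) => F (x : ℝ) :=
      hcont.comp_continuous continuous_subtype_val fun x => x.2
    have h2 : ⇑(Set.BijOn.equiv F hbij) =
        fun x : ↥(Icc (0:ℝ) 1) => (⟨F (x : ℝ), hbij.mapsTo x.2⟩ : ↥(Icc (0:ℝ) 1)) := rfl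
    rw [h2]
    exact h.subtype_mk _
  rw [continuousOn_iff_continuous_restrict]
  have hGeq : (Icc (0:ℝ) 1).restrict G =
      Subtype.val ∘ ⇑(hecont.homeoOfEquivCompactToT2.symm) := by
    funext b
    have h1 : G (b : ℝ) ∈ Icc (0:ℝ) 1 := hGmaps b.2
    have h2 : F (G (b : ℝ)) = (b : ℝ) := hinv.2 b.2
    have h3 : F ((hecont.homeoOfEquivCompactToT2.symm b : ↥(Icc (0:ℝ) 1)) : ℝ)
        = (b : ℝ) := by
      have h5 : ∀ x : ↥(Icc (0:ℝ) 1),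
          ((hecont.homeoOfEquivCompactToT2 x : ↥(Icc (0:ℝ) 1)) : ℝ) = F (x : ℝ) :=
        fun x => rfl
      rw [← h5 (hecont.homeoOfEquivCompactToT2.symm b),
        hecont.homeoOfEquivCompactToT2.apply_symm_apply b]
    exact hinj h1 (hecont.homeoOfEquivCompactToT2.symm b).2 (h2.trans h3.symm)
  rw [show (Icc (0:ℝ) 1).domRestrict G = _ from hGeq]
  exact continuous_subtype_val.comp hecont.homeoOfEquivCompactToT2.symm.continuous

end Stmt15Aux

open Stmt15Aux

theorem stmt_15 (μ : Measure ℝ) [IsProbabilityMeasure μ]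
    (hconc : μ (Set.Icc (0:ℝ) 1) = 1)
    (F : ℝ → ℝ) (hF : ∀ x : ℝ, F x = (μ (Set.Icc 0 x)).toReal) :
    ((∀ A : Set ℝ, MeasurableSet A → A ⊆ Set.Icc (0:ℝ) 1 → (μ A = 0 ↔ volume A = 0))
      ↔
     (∃ G : ℝ → ℝ,
        Set.BijOn F (Set.Icc (0:ℝ) 1) (Set.Icc (0:ℝ) 1) ∧
        Set.InvOn G F (Set.Icc (0:ℝ) 1) (Set.Icc (0:ℝ) 1) ∧
        ContinuousOn F (Set.Icc (0:ℝ) 1) ∧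
        ContinuousOn G (Set.Icc (0:ℝ) 1) ∧
        (∀ A : Set ℝ, A ⊆ Set.Icc (0:ℝ) 1 → volume A = 0 → volume (F '' A) = 0) ∧
        (∀ A : Set ℝ, A ⊆ Set.Icc (0:ℝ) 1 → volume A = 0 → volume (G '' A) = 0))) := by
  have hmono : Monotone F := Fmono hF
  constructor
  · intro hiff
    have hatom : ∀ x : ℝ, μ {x} = 0 := by
      intro x
      by_cases hx : x ∈ Icc (0:ℝ) 1
      · exact (hiff {x} (measurableSet_singleton x) (singleton_subset_iff.mpr hx)).2
          Real.volume_singleton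
      · refine measure_mono_null ?_ (out_null hconc)
        simp only [mem_Icc, not_and_or, not_le] at hx
        intro y hy
        rw [mem_singleton_iff] at hy
        subst hy
        rcases hx with h | h
        · exact Or.inl h
        · exact Or.inr h
    have hSF : ⇑(ProbabilityTheory.cdf μ) = F := by
      funext x
      rw [ProbabilityTheory.cdf_eq_real, measureReal_def, Iic_eq hconc, hF]
    have hcont : Continuous F := by
      rw [← hSF]
      refine continuous_iff_continuousAt.mpr fun x => ?_
      refine ((ProbabilityTheory.cdf μ).mono.continuousAt_iff_leftLim_eq_rightLim).mpr ?_
      rw [(ProbabilityTheory.cdf μ).rightLim_eq]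
      have h1 : (ProbabilityTheory.cdf μ).measure {x} = 0 := by
        rw [ProbabilityTheory.measure_cdf]; exact hatom x
      rw [StieltjesFunction.measure_singleton, ENNReal.ofReal_eq_zero] at h1
      have h2 := (ProbabilityTheory.cdf μ).mono.leftLim_le (le_refl x)
      linarith
    have hsm : StrictMonoOn F (Icc (0:ℝ) 1) := by
      intro x hx y hy hxy
      have hdecomp : μ (Icc 0 y) = μ (Icc 0 x) + μ (Ioc x y) := by
        rw [← Icc_union_Ioc_eq_Icc hx.1 hxy.le]
        exact measure_union ((Iic_disjoint_Ioc le_rfl).mono Icc_subset_Iic_self le_rfl)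
          measurableSet_Ioc
      have hpos : μ (Ioc x y) ≠ 0 := by
        intro h0
        have h1 := (hiff (Ioc x y) measurableSet_Ioc
          (fun z hz => ⟨hx.1.trans hz.1.le, hz.2.trans hy.2⟩)).1 h0
        rw [Real.volume_Ioc, ENNReal.ofReal_eq_zero] at h1
        linarith
      have h3 : 0 < (μ (Ioc x y)).toReal := ENNReal.toReal_pos hpos (measure_ne_top μ _)
      rw [hF x, hF y, hdecomp, ENNReal.toReal_add (measure_ne_top μ _) (measure_ne_top μ _)]
      linarith
    have hF0 : F 0 = 0 := by
      rw [hF, Icc_self, hatom 0]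
      simp
    have hF1 : F 1 = 1 := F_one hconc hF le_rfl
    have hmaps : MapsTo F (Icc (0:ℝ) 1) (Icc (0:ℝ) 1) := fun x hx =>
      ⟨by rw [← hF0]; exact hmono hx.1, by rw [← hF1]; exact hmono hx.2⟩
    have hsurj : SurjOn F (Icc (0:ℝ) 1) (Icc (0:ℝ) 1) := by
      have h := intermediate_value_Icc zero_le_one hcont.continuousOn
      rw [hF0, hF1] at h
      exact h
    have hbij : BijOn F (Icc (0:ℝ) 1) (Icc (0:ℝ) 1) := ⟨hmaps, hsm.injOn, hsurj⟩
    set G := Function.invFunOn F (Icc (0:ℝ) 1) with hGdef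
    have hinv : InvOn G F (Icc (0:ℝ) 1) (Icc (0:ℝ) 1) := hbij.invOn_invFunOn
    have hGmaps : MapsTo G (Icc (0:ℝ) 1) (Icc (0:ℝ) 1) := by
      intro b hb
      obtain ⟨a, ha, rfl⟩ := hsurj hb
      exact Function.invFunOn_mem ⟨a, ha, rfl⟩
    have hGc : ContinuousOn G (Icc (0:ℝ) 1) :=
      contOn_inv hbij hcont.continuousOn hinv hGmaps
    refine ⟨G, hbij, hinv, hcont.continuousOn, hGc, ?_, ?_⟩
    · intro A hA h0
      obtain ⟨B, hAB, hBm, hB0⟩ := exists_measurable_superset_of_null h0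
      have hkey := core hconc hF hsm hsurj hcont.continuousOn (hBm.inter measurableSet_Icc)
        inter_subset_right
      have hmu : μ (B ∩ Icc (0:ℝ) 1) = 0 :=
        (hiff _ (hBm.inter measurableSet_Icc) inter_subset_right).2
          (measure_mono_null inter_subset_left hB0)
      refine measure_mono_null (image_mono (f := F) (show A ⊆ B ∩ Icc (0:ℝ) 1 from fun x hx => ⟨hAB hx, hA hx⟩)) ?_
      rw [hkey, hmu]
    · intro A hA h0
      obtain ⟨B, hAB, hBm, hB0⟩ := exists_measurable_superset_of_null h0
      have hCm : MeasurableSet (Icc (0:ℝ) 1 ∩ F ⁻¹' (B ∩ Icc (0:ℝ) 1)) :=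
        measurableSet_Icc.inter (hmono.measurable (hBm.inter measurableSet_Icc))
      have hkey := core hconc hF hsm hsurj hcont.continuousOn hCm inter_subset_left
      have hFC : F '' (Icc (0:ℝ) 1 ∩ F ⁻¹' (B ∩ Icc (0:ℝ) 1)) ⊆ B ∩ Icc (0:ℝ) 1 := by
        rintro _ ⟨x, hx, rfl⟩
        exact hx.2
      have hC0 : μ (Icc (0:ℝ) 1 ∩ F ⁻¹' (B ∩ Icc (0:ℝ) 1)) = 0 := by
        rw [← hkey]
        exact measure_mono_null hFC (measure_mono_null inter_subset_left hB0)
      have hCv : volume (Icc (0:ℝ) 1 ∩ F ⁻¹' (B ∩ Icc (0:ℝ) 1)) = 0 :=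
        (hiff _ hCm inter_subset_left).1 hC0
      refine measure_mono_null ?_ hCv
      intro y hy
      obtain ⟨a, haA, rfl⟩ := hy
      refine mem_inter (hGmaps (hA haA)) ?_
      rw [mem_preimage, hinv.2 (hA haA)]
      exact ⟨hAB haA, hA haA⟩
  · rintro ⟨G, hbij, hinv, hFc, hGc, hNF, hNG⟩ A hAm hA
    have hsm : StrictMonoOn F (Set.Icc 0 1) := fun x hx y hy hxy =>
      lt_of_le_of_ne (hmono hxy.le) fun h => (ne_of_lt hxy) (hbij.injOn hx hy h)
    have hkey : volume (F '' A) = μ A := core hconc hF hsm hbij.surjOn hFc hAm hA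
    constructor
    · intro h0
      have h1 : volume (F '' A) = 0 := hkey.trans h0
      have h2 := hNG (F '' A) ((image_mono (f := F) hA).trans hbij.mapsTo.image_subset) h1
      rwa [hinv.1.image_image' hA] at h2
    · intro h0
      rw [← hkey]
      exact hNF A hA h0
end

section
/- Let f : [0,1] → ℝ be continuous and of bounded variation on [0,1], and let (Uₙ) be a decreasing sequence of open subsets of [0,1] (open in the subspace topology, with Uₙ₊₁ ⊆ Uₙ for all n). Then λ(f(⋂ₙ Uₙ)) = limₙ λ(f(Uₙ)), where λ denotes Lebesgue outer measure. -/
open MeasureTheory Set Filter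
open scoped ENNReal NNReal

-- helper: image of an ordConnected subset of [0,1] is measurable
lemma aux_img (f : ℝ → ℝ) (hf : ContinuousOn f (Set.Icc (0:ℝ) 1)) {s : Set ℝ}
    (hs : s.OrdConnected) (hsub : s ⊆ Set.Icc (0:ℝ) 1) : MeasurableSet (f '' s) :=
  ((hs.isPreconnected.image f (hf.mono hsub)).ordConnected).measurableSet

lemma aux_diam (f : ℝ → ℝ) (s : Set ℝ) : volume (f '' s) ≤ eVariationOn f s := by
  refine (Real.volume_le_diam _).trans (EMetric.diam_le ?_)
  rintro y ⟨x, hx, rfl⟩ z ⟨x', hx', rfl⟩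
  exact eVariationOn.edist_le f hx hx'

lemma aux_open_img (f : ℝ → ℝ) (hf : ContinuousOn f (Set.Icc (0:ℝ) 1)) {V : Set ℝ}
    (hV : IsOpen V) : MeasurableSet (f '' (V ∩ Set.Icc (0:ℝ) 1)) := by
  have : f '' (V ∩ Set.Icc (0:ℝ) 1) =
      ⋃ r : ℚ × ℚ, ⋃ (_ : Set.Ioo (r.1:ℝ) (r.2:ℝ) ⊆ V),
        f '' (Set.Ioo (r.1:ℝ) (r.2:ℝ) ∩ Set.Icc (0:ℝ) 1) := by
    apply Set.Subset.antisymm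
    · rintro y ⟨x, ⟨hxV, hxI⟩, rfl⟩
      obtain ⟨ε, hε, hball⟩ := Metric.isOpen_iff.1 hV x hxV
      obtain ⟨p, hp1, hp2⟩ := exists_rat_btwn (show x - ε < x by linarith)
      obtain ⟨q, hq1, hq2⟩ := exists_rat_btwn (show x < x + ε by linarith)
      have hsub : Set.Ioo (p:ℝ) (q:ℝ) ⊆ V := by
        intro z hz
        apply hball
        rw [Real.ball_eq_Ioo]
        exact ⟨by linarith [hz.1], by linarith [hz.2]⟩
      exact Set.mem_iUnion.2 ⟨(p, q), Set.mem_iUnion.2 ⟨hsub, ⟨x, ⟨⟨hp2, hq1⟩, hxI⟩, rfl⟩⟩⟩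
    · refine Set.iUnion_subset fun r => Set.iUnion_subset fun hsub => ?_
      exact Set.image_mono (Set.inter_subset_inter_left _ hsub)
  rw [this]
  refine MeasurableSet.iUnion fun r => MeasurableSet.iUnion fun _ => ?_
  exact aux_img f hf (Set.ordConnected_Ioo.inter Set.ordConnected_Icc)
    Set.inter_subset_right

lemma aux_var_sum (f : ℝ → ℝ) (m : ℕ) (hm : 1 ≤ m) :
    ∑ j ∈ Finset.range m, eVariationOn f
      (Set.Icc (0:ℝ) 1 ∩ Set.Icc ((j:ℝ)/m) (((j:ℝ)+1)/m)) ≤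
      eVariationOn f (Set.Icc (0:ℝ) 1) := by
  have hmpos : (0:ℝ) < m := by exact_mod_cast hm
  have key : ∀ i ≤ m, ∑ j ∈ Finset.range i, eVariationOn f
      (Set.Icc (0:ℝ) 1 ∩ Set.Icc ((j:ℝ)/m) (((j:ℝ)+1)/m)) =
      eVariationOn f (Set.Icc (0:ℝ) 1 ∩ Set.Icc 0 ((i:ℝ)/m)) := by
    intro i hi
    induction i with
    | zero =>
      simp only [Finset.range_zero, Finset.sum_empty, Nat.cast_zero, zero_div]
      rw [eq_comm]
      apply eVariationOn.subsingleton
      intro x hx y hy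
      have hx0 : x = 0 := le_antisymm (by simpa using hx.2.2) hx.1.1
      have hy0 : y = 0 := le_antisymm (by simpa using hy.2.2) hy.1.1
      rw [hx0, hy0]
    | succ i ih =>
      rw [Finset.sum_range_succ, ih (Nat.le_of_succ_le hi)]
      have h1 : (0:ℝ) ≤ (i:ℝ)/m := by positivity
      have h2 : (i:ℝ)/m ≤ ((i:ℝ)+1)/m := by
        gcongr
        linarith
      have hb : (i:ℝ)/m ∈ Set.Icc (0:ℝ) 1 := by
        constructor
        · exact h1
        · rw [div_le_one hmpos]
          exact_mod_cast Nat.le_of_succ_le hi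
      rw [eVariationOn.Icc_add_Icc f h1 h2 hb]
      push_cast
      ring_nf
  have := key m le_rfl
  rw [this]
  apply eVariationOn.mono
  exact Set.inter_subset_left

-- interval selection
lemma aux_sel {m : ℕ} (hm : 1 ≤ m) {x : ℝ} (hx : x ∈ Set.Icc (0:ℝ) 1) :
    min ⌊(m:ℝ)*x⌋₊ (m-1) < m ∧
    x ∈ Set.Icc ((min ⌊(m:ℝ)*x⌋₊ (m-1) : ℕ) / (m:ℝ))
      (((min ⌊(m:ℝ)*x⌋₊ (m-1) : ℕ) + 1) / (m:ℝ)) := by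
  have hmpos : (0:ℝ) < m := by exact_mod_cast hm
  set j := min ⌊(m:ℝ)*x⌋₊ (m-1) with hj
  have hjm : j < m := lt_of_le_of_lt (min_le_right _ _) (by omega)
  refine ⟨hjm, ?_, ?_⟩
  · rw [div_le_iff₀ hmpos]
    calc (j:ℝ) ≤ (⌊(m:ℝ)*x⌋₊ : ℕ) := by exact_mod_cast min_le_left _ _
    _ ≤ (m:ℝ)*x := Nat.floor_le (mul_nonneg hmpos.le hx.1)
    _ = x * m := by ring
  · rw [le_div_iff₀ hmpos]
    by_cases hcase : ⌊(m:ℝ)*x⌋₊ ≤ m - 1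
    · have : j = ⌊(m:ℝ)*x⌋₊ := min_eq_left hcase
      rw [this]
      have := Nat.lt_floor_add_one ((m:ℝ)*x)
      nlinarith [this]
    · have hjeq : j = m - 1 := min_eq_right (by omega)
      have : (j:ℝ) + 1 = m := by
        rw [hjeq]
        have : (1:ℕ) ≤ m := hm
        push_cast [Nat.cast_sub this]
        ring
      rw [this]
      nlinarith [hx.2]

lemma aux_null (f : ℝ → ℝ) (hf : ContinuousOn f (Set.Icc (0:ℝ) 1))
    (hbv : BoundedVariationOn f (Set.Icc (0:ℝ) 1)) :
    volume {y : ℝ | (f ⁻¹' {y} ∩ Set.Icc (0:ℝ) 1).Infinite} = 0 := by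
  set V := eVariationOn f (Set.Icc (0:ℝ) 1) with hVdef
  set B := {y : ℝ | (f ⁻¹' {y} ∩ Set.Icc (0:ℝ) 1).Infinite} with hBdef
  set A : ℕ → ℕ → Set ℝ := fun m j =>
    f '' (Set.Icc (0:ℝ) 1 ∩ Set.Icc ((j:ℝ)/m) (((j:ℝ)+1)/m)) with hAdef
  have measA : ∀ m j, MeasurableSet (A m j) := fun m j =>
    aux_img f hf (Set.ordConnected_Icc.inter Set.ordConnected_Icc) Set.inter_subset_left
  set g : ℕ → ℝ → ℝ≥0∞ := fun m y =>
    ∑ j ∈ Finset.range m, (A m j).indicator 1 y with hgdef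
  have hgmeas : ∀ m, Measurable (g m) := fun m =>
    Finset.measurable_sum _ fun j _ => measurable_const.indicator (measA m j)
  have hint : ∀ m, 1 ≤ m → ∫⁻ y, g m y ≤ V := by
    intro m hm
    rw [hgdef]
    simp only
    rw [lintegral_finset_sum (Finset.range m) (f := fun j => (A m j).indicator 1) (fun j _ => measurable_const.indicator (measA m j))]
    calc ∑ j ∈ Finset.range m, ∫⁻ y, (A m j).indicator 1 y
        = ∑ j ∈ Finset.range m, volume (A m j) := by
          refine Finset.sum_congr rfl fun j _ => ?_
          exact lintegral_indicator_one (measA m j)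
      _ ≤ ∑ j ∈ Finset.range m, eVariationOn f
            (Set.Icc (0:ℝ) 1 ∩ Set.Icc ((j:ℝ)/m) (((j:ℝ)+1)/m)) :=
          Finset.sum_le_sum fun j _ => aux_diam f _
      _ ≤ V := aux_var_sum f m hm
  set C : ℕ → ℕ → Set ℝ := fun k m => {y | (k:ℝ≥0∞) ≤ g m y} with hCdef
  have hC : ∀ (k m : ℕ), 1 ≤ m → (k:ℝ≥0∞) * volume (C k m) ≤ V := fun k m hm =>
    (mul_meas_ge_le_lintegral₀ (hgmeas m).aemeasurable _).trans (hint m hm)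
  have hBsub : ∀ k : ℕ, B ⊆ ⋃ M : ℕ, ⋂ m, ⋂ (_ : M ≤ m), C k m := by
    intro k y hy
    obtain ⟨F, hFsub, hFcard⟩ := Set.Infinite.exists_subset_card_eq hy k
    -- find δ
    obtain ⟨δ, hδpos, hδ⟩ : ∃ δ > (0:ℝ), ∀ x ∈ F, ∀ x' ∈ F, x ≠ x' → δ ≤ |x - x'| := by
      set T := (F ×ˢ F).filter (fun p => p.1 ≠ p.2) with hT
      by_cases hTne : T.Nonempty
      · obtain ⟨p, hp, hmin⟩ := T.exists_min_image (fun p => |p.1 - p.2|) hTne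
        simp only [hT, Finset.mem_filter, Finset.mem_product] at hp
        refine ⟨|p.1 - p.2|, abs_pos.2 (sub_ne_zero.2 hp.2), ?_⟩
        intro x hx x' hx' hne
        exact hmin (x, x') (by simp [hT, hx, hx', hne])
      · refine ⟨1, one_pos, fun x hx x' hx' hne => absurd ?_ hTne⟩
        exact ⟨(x, x'), by simp [hT, hx, hx', hne]⟩
    refine Set.mem_iUnion.2 ⟨⌈1/δ⌉₊ + 1, ?_⟩
    refine Set.mem_iInter.2 fun m => Set.mem_iInter.2 fun hMm => ?_
    have hm1 : 1 ≤ m := le_trans (by omega) hMm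
    have hmpos : (0:ℝ) < m := by exact_mod_cast hm1
    have hmδ : 1/(m:ℝ) < δ := by
      rw [div_lt_iff₀ hmpos]
      have h1 : (1:ℝ)/δ < m := by
        calc (1:ℝ)/δ ≤ ⌈1/δ⌉₊ := Nat.le_ceil _
        _ < m := by exact_mod_cast hMm
      rw [mul_comm]
      exact (div_lt_iff₀ hδpos).1 h1
    set jm : ℝ → ℕ := fun x => min ⌊(m:ℝ)*x⌋₊ (m-1) with hjm
    have hmemI : ∀ x ∈ F, x ∈ Set.Icc ((jm x : ℝ)/m) (((jm x : ℝ)+1)/m) ∧ jm x < m := by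
      intro x hx
      have hxS := hFsub hx
      have := aux_sel hm1 hxS.2
      exact ⟨by exact_mod_cast this.2, this.1⟩
    have hinj : Set.InjOn jm F := by
      intro x hx x' hx' heq
      by_contra hne
      have h1 := (hmemI x hx).1
      have h2 := (hmemI x' hx').1
      rw [heq] at h1
      have key : ((jm x' : ℝ)+1)/m - (jm x' : ℝ)/m = 1/m := by field_simp; ring
      have habs : |x - x'| ≤ 1/m := by
        rw [abs_sub_le_iff]
        constructor <;> linarith [h1.1, h1.2, h2.1, h2.2]
      linarith [hδ x hx x' hx' hne, hmδ]
    -- now estimate g m y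
    show (k:ℝ≥0∞) ≤ g m y
    have himgsub : F.image jm ⊆ Finset.range m := by
      intro j hj
      obtain ⟨x, hx, rfl⟩ := Finset.mem_image.1 hj
      exact Finset.mem_range.2 (hmemI x hx).2
    calc (k:ℝ≥0∞) = ∑ j ∈ F.image jm, (A m j).indicator 1 y := by
          rw [Finset.sum_congr rfl (fun j hj => ?_), Finset.sum_const,
            Finset.card_image_of_injOn hinj, hFcard, nsmul_eq_mul, mul_one]
          obtain ⟨x, hx, rfl⟩ := Finset.mem_image.1 hj
          have hxS := hFsub hx
          have : y ∈ A m (jm x) := ⟨x, ⟨hxS.2, (hmemI x hx).1⟩, hxS.1⟩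
          simp [Set.indicator_of_mem this]
      _ ≤ g m y := Finset.sum_le_sum_of_subset himgsub
  -- conclude
  have hBbound : ∀ k : ℕ, (k:ℝ≥0∞) * volume B ≤ V := by
    intro k
    have hmono : Monotone (fun M : ℕ => ⋂ m, ⋂ (_ : M ≤ m), C k m) := by
      intro a b hab
      exact Set.iInter₂_mono' fun m hm => ⟨m, le_trans hab hm, subset_rfl⟩
    calc (k:ℝ≥0∞) * volume B ≤ (k:ℝ≥0∞) * volume (⋃ M : ℕ, ⋂ m, ⋂ (_ : M ≤ m), C k m) := by
          gcongr
          exact hBsub k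
      _ = (k:ℝ≥0∞) * ⨆ M : ℕ, volume (⋂ m, ⋂ (_ : M ≤ m), C k m) := by
          rw [Directed.measure_iUnion hmono.directed_le]
      _ = ⨆ M : ℕ, (k:ℝ≥0∞) * volume (⋂ m, ⋂ (_ : M ≤ m), C k m) := by rw [ENNReal.mul_iSup]
      _ ≤ V := by
          refine iSup_le fun M => ?_
          refine le_trans ?_ (hC k (M+1) (by omega))
          gcongr
          exact Set.iInter₂_subset (M+1) (by omega)
  by_contra hBne
  have hBpos : 0 < volume B := pos_iff_ne_zero.2 hBne
  have hBfin : volume B ≠ ⊤ := by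
    have hsub : B ⊆ f '' Set.Icc (0:ℝ) 1 := by
      rintro y hy
      obtain ⟨x, hx⟩ := hy.nonempty
      exact ⟨x, hx.2, hx.1⟩
    exact (lt_of_le_of_lt (measure_mono hsub)
      (lt_of_le_of_lt (aux_diam f _) (lt_top_iff_ne_top.2 hbv))).ne
  obtain ⟨k, hk⟩ := ENNReal.exists_nat_gt (ENNReal.div_lt_top hbv hBne).ne
  have : V < k * volume B := by
    rwa [ENNReal.div_lt_iff (Or.inl hBne) (Or.inl hBfin)] at hk
  exact absurd (hBbound k) (not_le.2 this)


theorem stmt_17 (f : ℝ → ℝ)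
    (hf : ContinuousOn f (Set.Icc (0:ℝ) 1))
    (hbv : BoundedVariationOn f (Set.Icc (0:ℝ) 1))
    (U : ℕ → Set ℝ)
    (hUopen : ∀ n, ∃ V : Set ℝ, IsOpen V ∧ U n = V ∩ Set.Icc (0:ℝ) 1)
    (hUmono : ∀ n, U (n + 1) ⊆ U n) :
    Filter.Tendsto (fun n => volume (f '' U n)) Filter.atTop
      (nhds (volume (f '' ⋂ n, U n))) := by
  have hUsub : ∀ n, U n ⊆ Set.Icc (0:ℝ) 1 := fun n => by
    obtain ⟨V, _, hUV⟩ := hUopen n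
    rw [hUV]; exact Set.inter_subset_right
  have hmeasU : ∀ n, MeasurableSet (f '' U n) := fun n => by
    obtain ⟨V, hVo, hUV⟩ := hUopen n
    rw [hUV]; exact aux_open_img f hf hVo
  have hanti : Antitone U := antitone_nat_of_succ_le hUmono
  have himg : Antitone fun n => f '' U n := fun a b h => Set.image_mono (hanti h)
  have hfin : volume (f '' U 0) ≠ ⊤ := by
    refine ((measure_mono (Set.image_mono (hUsub 0))).trans_lt ?_).ne
    exact lt_of_le_of_lt (aux_diam f _) (lt_top_iff_ne_top.2 hbv)
  have htend := tendsto_measure_iInter_atTop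
    (fun n => (hmeasU n).nullMeasurableSet) himg ⟨0, hfin⟩
  have key : volume (⋂ n, f '' U n) = volume (f '' ⋂ n, U n) := by
    refine le_antisymm ?_ (measure_mono (Set.image_iInter_subset U f))
    have hsubB : (⋂ n, f '' U n) ⊆ (f '' ⋂ n, U n) ∪
        {y : ℝ | (f ⁻¹' {y} ∩ Set.Icc (0:ℝ) 1).Infinite} := by
      intro y hy
      by_cases hyB : (f ⁻¹' {y} ∩ Set.Icc (0:ℝ) 1).Infinite
      · exact Or.inr hyB
      · left
        have hfinpre : (f ⁻¹' {y} ∩ Set.Icc (0:ℝ) 1).Finite := Set.not_infinite.1 hyB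
        set S : ℕ → Set ℝ := fun n => f ⁻¹' {y} ∩ U n with hS
        have hSfin : ∀ n, (S n).Finite := fun n =>
          hfinpre.subset (Set.inter_subset_inter_right _ (hUsub n))
        have hSne : ∀ n, (S n).Nonempty := by
          intro n
          obtain ⟨x, hxU, hxy⟩ := Set.mem_iInter.1 hy n
          exact ⟨x, hxy, hxU⟩
        obtain ⟨x, hx⟩ := IsCompact.nonempty_iInter_of_sequence_nonempty_isCompact_isClosed
          S (fun n => Set.inter_subset_inter_right _ (hUmono n)) hSne
          ((hSfin 0).isCompact) (fun n => (hSfin n).isClosed)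
        have hx' := Set.mem_iInter.1 hx
        exact ⟨x, Set.mem_iInter.2 fun n => (hx' n).2, (hx' 0).1⟩
    refine (measure_mono hsubB).trans ?_
    refine (measure_union_le _ _).trans ?_
    rw [aux_null f hf hbv, add_zero]
  rw [← key]
  exact htend
end
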